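/- Fix ε ∈ (0, 1/2) and q₀ ∈ (1/2, 1). There exists m ∈ ℕ such that for any finite index set S with |S| ≥ m and any family of pairs (p_j, q_j)_{j∈S} with p_j, q_j ∈ [ε, 1−ε] and p_j ≥ (1+ε)·q_j, the sum χ_S of independent log-likelihood-ratio variables χ_j (with χ_j = log(p_j/q_j) w.p. p_j and log((1−p_j)/(1−q_j)) w.p. 1−p_j under H, and w.p. q_j, 1−q_j under L) satisfies P_H[χ_S ≥ log(q₀/(1−q₀))] ≥ q₀ and P_L[χ_S ≤ −log(q₀/(1−q₀))] ≥ q₀. -/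

import Mathlib

open MeasureTheory ProbabilityTheory

lemma neg_log_quad {s : ℝ} (h0 : 0 < s) (h1 : s ≤ 1) :
    (1 - s) + (1 - s)^2 / 2 ≤ -Real.log s := by
  set f : ℝ → ℝ := fun x => -Real.log x - ((1 - x) + (1 - x)^2 / 2) with hf
  have hder : ∀ x ∈ Set.Ioo (0:ℝ) 1,
      HasDerivAt f (-x⁻¹ - (-1 + 2 * (1 - x) ^ 1 * -1 / 2)) x := by
    intro x hx
    have h1' : HasDerivAt (fun x : ℝ => 1 - x) (-1) x := by
      simpa using (hasDerivAt_id x).const_sub (1:ℝ)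
    exact ((Real.hasDerivAt_log (ne_of_gt hx.1)).neg).sub
      (h1'.add ((h1'.pow 2).div_const 2))
  have key : AntitoneOn f (Set.Ioc 0 1) := by
    apply antitoneOn_of_deriv_nonpos (convex_Ioc 0 1)
    · apply ContinuousOn.sub
      · exact (Real.continuousOn_log.mono (fun x hx => ne_of_gt hx.1)).neg
      · fun_prop
    · rw [interior_Ioc]
      exact fun x hx => (hder x hx).differentiableAt.differentiableWithinAt
    · rw [interior_Ioc]
      intro x hx
      rw [(hder x hx).deriv]
      have hx1 : 2 - x ≤ x⁻¹ := by
        rw [inv_eq_one_div, le_div_iff₀ hx.1]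
        nlinarith [sq_nonneg (1 - x)]
      ring_nf
      nlinarith [hx.1]
  have h := key ⟨h0, h1⟩ ⟨zero_lt_one, le_refl (1:ℝ)⟩ h1
  simp only [hf, Real.log_one] at h
  linarith [h]

lemma log_ge_one_sub_inv {t : ℝ} (ht : 0 < t) : 1 - 1/t ≤ Real.log t := by
  have h := Real.log_le_sub_one_of_pos (show (0:ℝ) < 1/t by positivity)
  rw [one_div, Real.log_inv] at h
  rw [one_div]
  linarith

lemma integral_comp_bool {Ω : Type} [MeasurableSpace Ω] (μ : Measure Ω) [IsProbabilityMeasure μ]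
    (X : Ω → Bool) (hX : Measurable X) (g : Bool → ℝ) :
    ∫ ω, g (X ω) ∂μ = (μ {ω | X ω = true}).toReal * g true
      + (1 - (μ {ω | X ω = true}).toReal) * g false := by
  have hgm : Measurable g := measurable_from_top
  have hs : MeasurableSet {ω | X ω = true} := hX (MeasurableSet.singleton true)
  have hint : Integrable (fun ω => g (X ω)) μ :=
    (memLp_of_bounded (a := min (g true) (g false)) (b := max (g true) (g false))
      (Filter.Eventually.of_forall (fun ω => by
        cases h : X ω <;> simp [h, Set.mem_Icc, le_max_left, le_max_right, min_le_left, min_le_right]))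
      (hgm.comp hX).aestronglyMeasurable 1).integrable le_rfl
  have hsplit := integral_add_compl hs hint
  have h1 : ∫ ω in {ω | X ω = true}, g (X ω) ∂μ = (μ {ω | X ω = true}).toReal * g true := by
    rw [setIntegral_congr_fun hs (g := fun _ => g true) (fun ω hω => by simp only [Set.mem_setOf_eq] at hω; rw [hω]),
      setIntegral_const, smul_eq_mul, measureReal_def]
  have h2 : ∫ ω in {ω | X ω = true}ᶜ, g (X ω) ∂μ
      = (1 - (μ {ω | X ω = true}).toReal) * g false := by
    rw [setIntegral_congr_fun hs.compl (g := fun _ => g false)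
      (fun ω hω => by simp only [Set.mem_compl_iff, Set.mem_setOf_eq, Bool.not_eq_true] at hω; simp [hω]),
      setIntegral_const, smul_eq_mul, measureReal_def, prob_compl_eq_one_sub hs,
      ENNReal.toReal_sub_of_le prob_le_one ENNReal.one_ne_top, ENNReal.toReal_one]
  rw [← hsplit, h1, h2]

lemma cheb_aux {Ω : Type} [MeasurableSpace Ω] (μ : Measure Ω) [IsProbabilityMeasure μ]
    {n : ℕ} (χ : Fin n → Ω → ℝ) (hmeas : ∀ j, Measurable (χ j))
    (C ρ T δ : ℝ) (hC : 0 < C) (hρ : 0 < ρ) (hT : 0 < T) (hδ : 0 < δ)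
    (hbound : ∀ j ω, |χ j ω| ≤ C)
    (hmean : ∀ j, ρ ≤ ∫ ω, χ j ω ∂μ)
    (hindep : iIndepFun χ μ)
    (hn1 : T ≤ n * ρ / 2) (hn2 : 16 * C^2 ≤ δ * (n * ρ^2)) :
    1 - δ ≤ (μ {ω | T ≤ ∑ j, χ j ω}).toReal := by
  rcases le_or_gt 1 δ with hδ1 | hδ1
  · have : (0:ℝ) ≤ (μ {ω | T ≤ ∑ j, χ j ω}).toReal := ENNReal.toReal_nonneg
    linarith
  have hn : 0 < (n:ℝ) := by
    by_contra h
    push_neg at h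
    have : (n:ℝ) = 0 := le_antisymm h (Nat.cast_nonneg n)
    rw [this] at hn1; linarith
  have hml2 : ∀ j, MemLp (χ j) 2 μ := fun j =>
    memLp_of_bounded (Filter.Eventually.of_forall (fun ω => abs_le.mp (hbound j ω)))
      (hmeas j).aestronglyMeasurable 2
  have hSml2 : MemLp (∑ j, χ j) 2 μ := memLp_finset_sum' _ (fun j _ => hml2 j)
  have hSmeas : Measurable (fun ω => ∑ j, χ j ω) := by
    exact Finset.measurable_sum _ (fun j _ => hmeas j)
  have hint : ∀ j, Integrable (χ j) μ := fun j => (hml2 j).integrable one_le_two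
  have hEsum : ∫ ω, (∑ j, χ j) ω ∂μ = ∑ j, ∫ ω, χ j ω ∂μ := by
    simp only [Finset.sum_apply]
    exact integral_finset_sum _ (fun j _ => hint j)
  have hE : (n:ℝ) * ρ ≤ ∫ ω, (∑ j, χ j) ω ∂μ := by
    rw [hEsum]
    calc (n:ℝ) * ρ = ∑ _j : Fin n, ρ := by simp [mul_comm]
    _ ≤ ∑ j, ∫ ω, χ j ω ∂μ := Finset.sum_le_sum (fun j _ => hmean j)
  have hvar : variance (∑ j, χ j) μ ≤ n * C^2 := by
    rw [IndepFun.variance_sum (fun j _ => hml2 j)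
      (fun i _ j _ hij => hindep.indepFun hij)]
    calc ∑ j, variance (χ j) μ ≤ ∑ _j : Fin n, C^2 := by
          apply Finset.sum_le_sum
          intro j _
          have := variance_le_sq_of_bounded (a := -C) (b := C) (X := χ j)
            (Filter.Eventually.of_forall (fun ω => abs_le.mp (hbound j ω)))
            (hmeas j).aemeasurable (μ := μ)
          calc variance (χ j) μ ≤ ((C - -C)/2)^2 := this
          _ = C^2 := by ring
    _ = n * C^2 := by simp [mul_comm]
  set c : ℝ := n * ρ / 2 with hc
  have hcpos : 0 < c := by positivity
  have hcheb := meas_ge_le_variance_div_sq (μ := μ) hSml2 hcpos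
  have hsub : {ω | (∑ j, χ j) ω < T} ⊆ {ω | c ≤ |(∑ j, χ j) ω - ∫ ω, (∑ j, χ j) ω ∂μ|} := by
    intro ω hω
    simp only [Set.mem_setOf_eq] at hω ⊢
    have h1 : (∑ j, χ j) ω < T := hω
    have : c ≤ (∫ ω, (∑ j, χ j) ω ∂μ) - (∑ j, χ j) ω := by
      have : T ≤ n * ρ - c := by rw [hc]; linarith
      linarith
    calc c ≤ (∫ ω, (∑ j, χ j) ω ∂μ) - (∑ j, χ j) ω := this
    _ ≤ |(∑ j, χ j) ω - ∫ ω, (∑ j, χ j) ω ∂μ| := by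
        rw [abs_sub_comm]; exact le_abs_self _
  have hbnd : variance (∑ j, χ j) μ / c^2 ≤ δ := by
    rw [div_le_iff₀ (by positivity)]
    have h1 : (n:ℝ) * C^2 ≤ δ * c^2 := by
      have hkey := mul_le_mul_of_nonneg_right hn2 hn.le
      have hC2 : 0 ≤ C^2 := sq_nonneg C
      have hn1' : (1:ℝ) ≤ (n:ℝ) := by
        have : 1 ≤ n := Nat.one_le_iff_ne_zero.mpr (fun h => by simp [h] at hn)
        exact_mod_cast this
      rw [hc]
      nlinarith [mul_le_mul_of_nonneg_left hC2 (sub_nonneg.mpr hn1')]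
    exact le_trans hvar h1
  have hfun : (fun ω => ∑ j, χ j ω) = ∑ j, χ j := by ext ω; simp
  have hAmeas : MeasurableSet {ω | (∑ j, χ j) ω < T} := by
    rw [← hfun]
    exact measurableSet_lt hSmeas measurable_const
  have hcompl : μ {ω | (∑ j, χ j) ω < T} ≤ ENNReal.ofReal δ :=
    le_trans (measure_mono hsub) (le_trans hcheb (ENNReal.ofReal_le_ofReal hbnd))
  have hset : {ω | T ≤ ∑ j, χ j ω} = {ω | (∑ j, χ j) ω < T}ᶜ := by
    ext ω; simp [not_lt, Finset.sum_apply]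
  rw [hset, prob_compl_eq_one_sub hAmeas,
    ENNReal.toReal_sub_of_le (le_trans hcompl (by simpa using ENNReal.ofReal_le_one.mpr hδ1.le)) ENNReal.one_ne_top,
    ENNReal.toReal_one]
  have : (μ {ω | (∑ j, χ j) ω < T}).toReal ≤ δ := by
    have := ENNReal.toReal_mono ENNReal.ofReal_ne_top hcompl
    rwa [ENNReal.toReal_ofReal hδ.le] at this
  linarith

section Means
variable {ε p q : ℝ}

lemma basic_facts (hε : ε ∈ Set.Ioo (0:ℝ) (1/2)) (hp : p ∈ Set.Icc ε (1-ε))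
    (hq : q ∈ Set.Icc ε (1-ε)) (hpq : (1+ε)*q ≤ p) :
    0 < q ∧ q ≤ p ∧ ε^2 ≤ p - q ∧ p < 1 ∧ q < 1 ∧ 0 < p := by
  obtain ⟨hε0, hε2⟩ := hε
  obtain ⟨hp1, hp2⟩ := hp
  obtain ⟨hq1, hq2⟩ := hq
  have hq0 : 0 < q := lt_of_lt_of_le hε0 hq1
  refine ⟨hq0, by nlinarith, by nlinarith, by linarith, by linarith, by linarith⟩

lemma mean_H (hε : ε ∈ Set.Ioo (0:ℝ) (1/2)) (hp : p ∈ Set.Icc ε (1-ε))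
    (hq : q ∈ Set.Icc ε (1-ε)) (hpq : (1+ε)*q ≤ p) :
    ε^4/2 ≤ p * Real.log (p/q) + (1-p) * Real.log ((1-p)/(1-q)) := by
  obtain ⟨hq0, hqp, hgap, hp1, hq1, hp0⟩ := basic_facts hε hp hq hpq
  have h1p : (0:ℝ) < 1 - p := by linarith
  have h1q : (0:ℝ) < 1 - q := by linarith
  have hs1 : Real.log (p/q) = -Real.log (q/p) := by
    rw [← Real.log_inv, inv_div]
  have h1 := neg_log_quad (s := q/p) (by positivity) ((div_le_one hp0).mpr hqp)
  rw [← hs1] at h1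
  have hqp' : 1 - q/p = (p-q)/p := by field_simp
  rw [hqp'] at h1
  have hterm1 : (p-q) + (p-q)^2/2 ≤ p * Real.log (p/q) := by
    have h2 := mul_le_mul_of_nonneg_left h1 hp0.le
    have h3 : p * ((p-q)/p + ((p-q)/p)^2/2) = (p-q) + (p-q)^2/(2*p) := by
      field_simp
    rw [h3] at h2
    have h4 : (p-q)^2/2 ≤ (p-q)^2/(2*p) := by
      apply div_le_div_of_nonneg_left (sq_nonneg _) (by nlinarith)
      nlinarith
    linarith
  have h5 := log_ge_one_sub_inv (t := (1-p)/(1-q)) (div_pos h1p h1q)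
  have h6 : 1 - 1/((1-p)/(1-q)) = 1 - (1-q)/(1-p) := by
    rw [one_div, inv_div]
  rw [h6] at h5
  have hterm2 : q - p ≤ (1-p) * Real.log ((1-p)/(1-q)) := by
    have h7 := mul_le_mul_of_nonneg_left h5 (by linarith : (0:ℝ) ≤ 1-p)
    have h8 : (1-p) * (1 - (1-q)/(1-p)) = q - p := by
      field_simp
      ring
    rw [h8] at h7
    linarith
  nlinarith [sq_nonneg (p - q - ε^2)]

lemma mean_L (hε : ε ∈ Set.Ioo (0:ℝ) (1/2)) (hp : p ∈ Set.Icc ε (1-ε))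
    (hq : q ∈ Set.Icc ε (1-ε)) (hpq : (1+ε)*q ≤ p) :
    ε^4/2 ≤ -(q * Real.log (p/q) + (1-q) * Real.log ((1-p)/(1-q))) := by
  obtain ⟨hq0, hqp, hgap, hp1, hq1, hp0⟩ := basic_facts hε hp hq hpq
  have h1p : (0:ℝ) < 1 - p := by linarith
  have h1q : (0:ℝ) < 1 - q := by linarith
  have h1 : Real.log (p/q) ≤ p/q - 1 := Real.log_le_sub_one_of_pos (by positivity)
  have hterm1 : q * Real.log (p/q) ≤ p - q := by
    have h2 := mul_le_mul_of_nonneg_left h1 hq0.le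
    have h3 : q * (p/q - 1) = p - q := by field_simp
    rw [h3] at h2; exact h2
  have h4 := neg_log_quad (s := (1-p)/(1-q)) (div_pos h1p h1q)
    ((div_le_one h1q).mpr (by linarith))
  have h5 : 1 - (1-p)/(1-q) = (p-q)/(1-q) := by
    field_simp
    ring
  rw [h5] at h4
  have hterm2 : (1-q) * Real.log ((1-p)/(1-q)) ≤ -((p-q) + (p-q)^2/2) := by
    have h6 := mul_le_mul_of_nonneg_left h4 (by linarith : (0:ℝ) ≤ 1-q)
    have h7 : (1-q) * ((p-q)/(1-q) + ((p-q)/(1-q))^2/2) = (p-q) + (p-q)^2/(2*(1-q)) := by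
      field_simp
    rw [h7, mul_neg] at h6
    have h9 : (p-q)^2/2 ≤ (p-q)^2/(2*(1-q)) := by
      apply div_le_div_of_nonneg_left (sq_nonneg _) (by nlinarith)
      nlinarith
    linarith
  nlinarith [sq_nonneg (p - q - ε^2)]

lemma abs_log_ratio (hε : ε ∈ Set.Ioo (0:ℝ) (1/2)) {a b : ℝ}
    (ha : a ∈ Set.Icc ε (1-ε)) (hb : b ∈ Set.Icc ε (1-ε)) :
    |Real.log (a/b)| ≤ Real.log ((1-ε)/ε) := by
  obtain ⟨hε0, hε2⟩ := hε
  have ha0 : 0 < a := lt_of_lt_of_le hε0 ha.1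
  have hb0 : 0 < b := lt_of_lt_of_le hε0 hb.1
  have h1ε : (0:ℝ) < 1 - ε := by linarith
  rw [abs_le]
  constructor
  · have hlow : ε/(1-ε) ≤ a/b := div_le_div₀ ha0.le ha.1 hb0 hb.2
    have hll := Real.log_le_log (div_pos hε0 h1ε) hlow
    have heq : Real.log (ε/(1-ε)) = -Real.log ((1-ε)/ε) := by
      rw [← Real.log_inv, inv_div]
    linarith
  · apply Real.log_le_log (div_pos ha0 hb0)
    exact div_le_div₀ (by linarith) ha.2 hε0 hb.1

end Means

/-- If `|S| ≥ m` conditionally independent binary signals each have likelihood ratios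
bounded as stated, the sum of log-likelihood ratios crosses the threshold
`log(q₀/(1-q₀))` with probability at least `q₀` under each state. -/
theorem stmt_12 (ε q₀ : ℝ) (hε : ε ∈ Set.Ioo (0:ℝ) (1/2)) (hq₀ : q₀ ∈ Set.Ioo (1/2 : ℝ) 1) :
    ∃ m : ℕ, ∀ n : ℕ, m ≤ n → ∀ p q : Fin n → ℝ,
      (∀ j, p j ∈ Set.Icc ε (1 - ε)) → (∀ j, q j ∈ Set.Icc ε (1 - ε)) →
      (∀ j, (1 + ε) * q j ≤ p j) →
      ∀ (Ω : Type) (_ : MeasurableSpace Ω) (μH μL : Measure Ω),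
        IsProbabilityMeasure μH → IsProbabilityMeasure μL →
        ∀ X : Fin n → Ω → Bool, (∀ j, Measurable (X j)) →
        iIndepFun X μH →
        iIndepFun X μL →
        (∀ j, (μH {ω | X j ω = true}).toReal = p j) →
        (∀ j, (μL {ω | X j ω = true}).toReal = q j) →
        (μH {ω | Real.log (q₀ / (1 - q₀)) ≤
            ∑ j, (if X j ω = true then Real.log (p j / q j)
              else Real.log ((1 - p j) / (1 - q j)))}).toReal ≥ q₀ ∧
        (μL {ω | ∑ j, (if X j ω = true then Real.log (p j / q j)
              else Real.log ((1 - p j) / (1 - q j)))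
            ≤ -Real.log (q₀ / (1 - q₀))}).toReal ≥ q₀ := by
  obtain ⟨hε0, hε2⟩ := hε
  obtain ⟨hq01, hq02⟩ := hq₀
  set C : ℝ := Real.log ((1-ε)/ε) with hCdef
  set T : ℝ := Real.log (q₀/(1-q₀)) with hTdef
  set ρ : ℝ := ε^4/2 with hρdef
  set δ : ℝ := 1 - q₀ with hδdef
  have hC : 0 < C := Real.log_pos (by rw [lt_div_iff₀ hε0]; linarith)
  have hT : 0 < T := Real.log_pos (by rw [lt_div_iff₀ (by linarith)]; linarith)
  have hρ : 0 < ρ := by rw [hρdef]; positivity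
  have hδ : 0 < δ := by rw [hδdef]; linarith
  refine ⟨⌈max (2*T/ρ) (16*C^2/(δ*ρ^2))⌉₊, ?_⟩
  intro n hn p q hp hq hpq Ω _ μH μL hPH hPL X hXm hindH hindL hpX hqX
  haveI := hPH; haveI := hPL
  have hnc : (⌈max (2*T/ρ) (16*C^2/(δ*ρ^2))⌉₊ : ℝ) ≤ n := Nat.cast_le.mpr hn
  have hmax1 : 2*T/ρ ≤ (n:ℝ) := le_trans (le_trans (le_max_left _ _) (Nat.le_ceil _)) hnc
  have hmax2 : 16*C^2/(δ*ρ^2) ≤ (n:ℝ) := le_trans (le_trans (le_max_right _ _) (Nat.le_ceil _)) hnc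
  have hn1 : T ≤ n * ρ / 2 := by
    rw [div_le_iff₀ hρ] at hmax1; linarith
  have hn2 : 16 * C^2 ≤ δ * ((n:ℝ) * ρ^2) := by
    rw [div_le_iff₀ (mul_pos hδ (pow_pos hρ 2))] at hmax2
    have : (n:ℝ)*(δ*ρ^2) = δ*((n:ℝ)*ρ^2) := by ring
    linarith
  have hp' : ∀ j, 1 - p j ∈ Set.Icc ε (1-ε) :=
    fun j => ⟨by linarith [(hp j).2], by linarith [(hp j).1]⟩
  have hq' : ∀ j, 1 - q j ∈ Set.Icc ε (1-ε) :=
    fun j => ⟨by linarith [(hq j).2], by linarith [(hq j).1]⟩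
  have hbound : ∀ (j : Fin n) (ω : Ω),
      |(if X j ω = true then Real.log (p j / q j)
        else Real.log ((1 - p j) / (1 - q j)))| ≤ C := by
    intro j ω
    cases h : X j ω
    · rw [if_neg (by simp)]
      exact abs_log_ratio ⟨hε0, hε2⟩ (hp' j) (hq' j)
    · rw [if_pos rfl]
      exact abs_log_ratio ⟨hε0, hε2⟩ (hp j) (hq j)
  have hintH : ∀ j, ∫ ω, (if X j ω = true then Real.log (p j / q j)
        else Real.log ((1 - p j) / (1 - q j))) ∂μH
      = p j * Real.log (p j / q j) + (1 - p j) * Real.log ((1 - p j) / (1 - q j)) := by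
    intro j
    have h := integral_comp_bool μH (X j) (hXm j)
      (fun b => if b = true then Real.log (p j / q j) else Real.log ((1 - p j) / (1 - q j)))
    simpa [hpX j] using h
  have hintL : ∀ j, ∫ ω, (if X j ω = true then Real.log (p j / q j)
        else Real.log ((1 - p j) / (1 - q j))) ∂μL
      = q j * Real.log (p j / q j) + (1 - q j) * Real.log ((1 - p j) / (1 - q j)) := by
    intro j
    have h := integral_comp_bool μL (X j) (hXm j)
      (fun b => if b = true then Real.log (p j / q j) else Real.log ((1 - p j) / (1 - q j)))
    simpa [hqX j] using h
  have hmeasχ : ∀ j, Measurable (fun ω => (if X j ω = true then Real.log (p j / q j)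
        else Real.log ((1 - p j) / (1 - q j)))) := by
    intro j
    exact (measurable_from_top (f := fun b : Bool => if b = true then Real.log (p j / q j)
      else Real.log ((1 - p j) / (1 - q j)))).comp (hXm j)
  constructor
  · have H := cheb_aux μH (fun j ω => (if X j ω = true then Real.log (p j / q j)
        else Real.log ((1 - p j) / (1 - q j)))) hmeasχ C ρ T δ hC hρ hT hδ hbound
      (fun j => by
        rw [hintH j, hρdef]
        have := mean_H ⟨hε0, hε2⟩ (hp j) (hq j) (hpq j)
        linarith)
      (hindH.comp (fun j b => if b = true then Real.log (p j / q j)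
        else Real.log ((1 - p j) / (1 - q j))) (fun j => measurable_from_top))
      hn1 hn2
    rw [ge_iff_le, show q₀ = 1 - δ by rw [hδdef]; ring]
    exact H
  · have H := cheb_aux μL (fun j ω => -(if X j ω = true then Real.log (p j / q j)
        else Real.log ((1 - p j) / (1 - q j)))) (fun j => (hmeasχ j).neg) C ρ T δ hC hρ hT hδ
      (fun j ω => by rw [abs_neg]; exact hbound j ω)
      (fun j => by
        rw [integral_neg, hintL j, hρdef]
        have := mean_L ⟨hε0, hε2⟩ (hp j) (hq j) (hpq j)
        linarith)
      (hindL.comp (fun j b => -(if b = true then Real.log (p j / q j)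
        else Real.log ((1 - p j) / (1 - q j)))) (fun j => measurable_from_top))
      hn1 hn2
    have hseteq : {ω | T ≤ ∑ j, -(if X j ω = true then Real.log (p j / q j)
          else Real.log ((1 - p j) / (1 - q j)))}
        = {ω | ∑ j, (if X j ω = true then Real.log (p j / q j)
          else Real.log ((1 - p j) / (1 - q j))) ≤ -T} := by
      ext ω
      rw [Set.mem_setOf_eq, Set.mem_setOf_eq, Finset.sum_neg_distrib, le_neg]
    rw [hseteq] at H
    rw [ge_iff_le, show q₀ = 1 - δ by rw [hδdef]; ring]
    exact H
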